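/- Let S_Y = R/I_Y be a graded domain, f, a ∈ S_Y homogeneous with deg a = deg f + 1 and a/f ∉ S_Y, λ = a/f, and I_X = ker(R[x_0] → Frac(S_Y), x_0 ↦ λ). For each i ≥ 1 there is a commutative diagram with exact rows: 0 → (R/K_i)(−i(deg f + 1)) →^{a^i} S_Y/(f·(a,f)^{i-1}) → S_Y/(a,f)^i → 0 and 0 → (S_Y/(a,f)^{i-1})(−deg f) →^{f} S_Y/(f·(a,f)^{i-1}) → S_Y/(f) → 0, where K_i = K_i(I_X) is the i-th partial elimination ideal. -/

import Mathlib

set_option synthInstance.maxHeartbeats 1000000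
set_option maxHeartbeats 1000000

open MvPolynomial Polynomial

/-- Elements of `J ⊆ R[x₀]` of `x₀`-degree at most `i`. -/
noncomputable def Ktilde {k : Type} [Field k] {σ : Type}
    (J : Ideal (Polynomial (MvPolynomial σ k))) (i : ℕ) :
    Submodule (MvPolynomial σ k) (Polynomial (MvPolynomial σ k)) :=
  (Submodule.restrictScalars (MvPolynomial σ k) J) ⊓ Polynomial.degreeLE _ (i : ℕ)

/-- The `i`-th partial elimination ideal of `J`. -/
noncomputable def pei {k : Type} [Field k] {σ : Type}
    (J : Ideal (Polynomial (MvPolynomial σ k))) (i : ℕ) :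
    Ideal (MvPolynomial σ k) :=
  Submodule.map (Polynomial.lcoeff _ i) (Ktilde J i)

/-- A product of powers of the two generators lies in the corresponding power
of the ideal generated by the pair. -/
lemma pair_pow_mem {S : Type*} [CommRing S] (α β : S) {j n : ℕ} (h : j ≤ n) :
    α ^ j * β ^ (n - j) ∈ (Ideal.span {α, β}) ^ n := by
  have hα : α ∈ Ideal.span {α, β} := Ideal.subset_span (by simp)
  have hβ : β ∈ Ideal.span {α, β} := Ideal.subset_span (by simp)
  have := Ideal.mul_mem_mul (Ideal.pow_mem_pow hα j) (Ideal.pow_mem_pow hβ (n - j))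
  rwa [← pow_add, Nat.add_sub_cancel' h] at this

/-- Every element of the `n`-th power of a two-generated ideal is a combination
of the monomials `α^j β^(n-j)`. -/
lemma mem_pair_pow {S : Type*} [CommRing S] {α β : S} {n : ℕ} {x : S}
    (hx : x ∈ (Ideal.span {α, β}) ^ n) :
    ∃ c : ℕ → S, x = ∑ j ∈ Finset.range (n + 1), c j * (α ^ j * β ^ (n - j)) := by
  induction n generalizing x with
  | zero => exact ⟨fun _ => x, by simp⟩
  | succ n ih =>
    rw [pow_succ] at hx
    refine Submodule.mul_induction_on hx ?_ ?_
    · intro m hm z hz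
      obtain ⟨c, hc⟩ := ih hm
      rw [Ideal.mem_span_pair] at hz
      obtain ⟨u, v, huv⟩ := hz
      refine ⟨fun j => (if 1 ≤ j then c (j - 1) * u else 0) + (if j ≤ n then c j * v else 0), ?_⟩
      have e1 : ∑ j ∈ Finset.range (n + 2),
          (if j ≤ n then c j * v else 0) * (α ^ j * β ^ (n + 1 - j))
          = ∑ j ∈ Finset.range (n + 1), c j * v * (α ^ j * β ^ (n + 1 - j)) := by
        rw [Finset.sum_range_succ, if_neg (by omega : ¬ n + 1 ≤ n), zero_mul, add_zero]
        refine Finset.sum_congr rfl fun j hj => ?_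
        rw [Finset.mem_range] at hj
        rw [if_pos (by omega)]
      have e2 : ∑ j ∈ Finset.range (n + 2),
          (if 1 ≤ j then c (j - 1) * u else 0) * (α ^ j * β ^ (n + 1 - j))
          = ∑ j ∈ Finset.range (n + 1), c j * u * (α ^ (j + 1) * β ^ (n - j)) := by
        rw [Finset.sum_range_succ']
        rw [if_neg (by omega : ¬ (1:ℕ) ≤ 0), zero_mul, add_zero]
        refine Finset.sum_congr rfl fun j hj => ?_
        rw [Finset.mem_range] at hj
        rw [if_pos (by omega)]
        have h1 : j + 1 - 1 = j := by omega
        have h2 : n + 1 - (j + 1) = n - j := by omega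
        rw [h1, h2]
      calc m * z = (∑ j ∈ Finset.range (n + 1), c j * (α ^ j * β ^ (n - j))) * (u * α + v * β) := by
            rw [← hc, huv]
        _ = (∑ j ∈ Finset.range (n + 1), c j * u * (α ^ (j + 1) * β ^ (n - j)))
            + ∑ j ∈ Finset.range (n + 1), c j * v * (α ^ j * β ^ (n + 1 - j)) := by
            rw [mul_add, Finset.sum_mul, Finset.sum_mul]
            congr 1
            · refine Finset.sum_congr rfl fun j hj => ?_
              ring
            · refine Finset.sum_congr rfl fun j hj => ?_
              rw [Finset.mem_range] at hj
              have : n + 1 - j = (n - j) + 1 := by omega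
              rw [this]
              ring
        _ = ∑ j ∈ Finset.range (n + 2),
              ((if 1 ≤ j then c (j - 1) * u else 0) + (if j ≤ n then c j * v else 0))
                * (α ^ j * β ^ (n + 1 - j)) := by
            simp only [add_mul, Finset.sum_add_distrib, e1, e2]
    · rintro y z ⟨cy, hy⟩ ⟨cz, hz⟩
      exact ⟨fun j => cy j + cz j, by simp [hy, hz, add_mul, Finset.sum_add_distrib]⟩

/-- `(A ⊔ B)^(n+1) = A^(n+1) ⊔ B * (A ⊔ B)^n`. -/
lemma sup_pow_eq {S : Type*} [CommRing S] (A B : Ideal S) (n : ℕ) :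
    (A ⊔ B) ^ (n + 1) = A ^ (n + 1) ⊔ B * (A ⊔ B) ^ n := by
  induction n with
  | zero => rw [pow_one, pow_one, pow_zero, mul_one]
  | succ n ih =>
    rw [pow_succ]
    rw [ih]
    rw [Ideal.sup_mul]
    rw [Ideal.mul_sup]
    rw [mul_assoc]
    rw [← pow_succ A (n+1)]
    rw [← pow_succ (A ⊔ B) n]
    conv_rhs => rw [← ih]
    apply le_antisymm
    · apply sup_le
      · apply sup_le
        · exact le_sup_left
        · apply le_sup_of_le_right
          rw [mul_comm]
          exact Ideal.mul_mono_right (Ideal.pow_right_mono le_sup_left _)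
      · exact le_sup_right
    · exact sup_le (le_sup_of_le_left le_sup_left) le_sup_right

theorem unprojection_diagram
    {k : Type} [Field k] {σ : Type}
    (IY : Ideal (MvPolynomial σ k))
    (hIYprime : IY.IsPrime)
    (hIYhom : ∀ f ∈ IY, ∀ n, homogeneousComponent n f ∈ IY)
    (hIYlin : ∀ f ∈ IY, f.IsHomogeneous 1 → f = 0)
    (lam : FractionRing (MvPolynomial σ k ⧸ IY))
    (a f : MvPolynomial σ k) (d : ℕ)
    (ha : a.IsHomogeneous (d + 1)) (hf : f.IsHomogeneous d) (hfY : f ∉ IY)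
    (hrep : lam * algebraMap (MvPolynomial σ k ⧸ IY) _ (Ideal.Quotient.mk IY f)
      = algebraMap (MvPolynomial σ k ⧸ IY) _ (Ideal.Quotient.mk IY a))
    (hfake : lam ∉ (algebraMap (MvPolynomial σ k ⧸ IY)
      (FractionRing (MvPolynomial σ k ⧸ IY))).range)
    (φ : Polynomial (MvPolynomial σ k) →+* FractionRing (MvPolynomial σ k ⧸ IY))
    (hφ : φ = Polynomial.eval₂RingHom
      ((algebraMap (MvPolynomial σ k ⧸ IY) (FractionRing (MvPolynomial σ k ⧸ IY))).comp
        (Ideal.Quotient.mk IY)) lam)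
    (i : ℕ) (hi : 1 ≤ i)
    (Jf : Ideal (MvPolynomial σ k ⧸ IY))
    (hJf : Jf = Ideal.span {Ideal.Quotient.mk IY f}
      * (Ideal.span {Ideal.Quotient.mk IY a, Ideal.Quotient.mk IY f}) ^ (i - 1)) :
    -- first row: left exactness (injectivity of multiplication by `āⁱ` out of `R/K_i`)
    Submodule.colon Jf (Ideal.span {(Ideal.Quotient.mk IY a) ^ i})
        = Ideal.map (Ideal.Quotient.mk IY) (pei (RingHom.ker φ) i) ∧
    -- first row: exactness at the middle term
    Ideal.span {(Ideal.Quotient.mk IY a) ^ i} ⊔ Jf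
        = (Ideal.span {Ideal.Quotient.mk IY a, Ideal.Quotient.mk IY f}) ^ i ∧
    -- second row: left exactness (injectivity of multiplication by `f̄`)
    Submodule.colon Jf (Ideal.span {Ideal.Quotient.mk IY f})
        = (Ideal.span {Ideal.Quotient.mk IY a, Ideal.Quotient.mk IY f}) ^ (i - 1) ∧
    -- second row: exactness at the middle term
    Jf ≤ Ideal.span {Ideal.Quotient.mk IY f} := by
  haveI hdom : IsDomain (MvPolynomial σ k ⧸ IY) :=
    (Ideal.Quotient.isDomain_iff_prime IY).mpr hIYprime
  set π := Ideal.Quotient.mk IY with hπ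
  set ψ := algebraMap (MvPolynomial σ k ⧸ IY) (FractionRing (MvPolynomial σ k ⧸ IY)) with hψ
  have ψinj : Function.Injective ψ := IsFractionRing.injective _ _
  have hfne : π f ≠ 0 := by
    rw [hπ, Ne, Ideal.Quotient.eq_zero_iff_mem]; exact hfY
  have hψfne : ψ (π f) ≠ 0 := fun h => hfne (ψinj (by rw [h, map_zero]))
  -- per-term computation in the fraction field
  have hterm : ∀ j, j ≤ i → ∀ r : MvPolynomial σ k ⧸ IY,
      ψ r * lam ^ j * ψ (π f) ^ i = ψ (r * ((π a) ^ j * (π f) ^ (i - j))) := by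
    intro j hj r
    have h1 : ψ (π f) ^ i = ψ (π f) ^ j * ψ (π f) ^ (i - j) := by
      rw [← pow_add, Nat.add_sub_cancel' hj]
    rw [map_mul, map_mul, map_pow, map_pow, h1, ← hrep, mul_pow]
    ring
  -- the key identity relating `φ` and sums in `S_Y`
  have key : ∀ q : Polynomial (MvPolynomial σ k), q.natDegree < i + 1 →
      φ q * ψ (π f) ^ i
        = ψ (∑ j ∈ Finset.range (i + 1), π (q.coeff j) * ((π a) ^ j * (π f) ^ (i - j))) := by
    intro q hq
    have hev : φ q = Polynomial.eval₂ (ψ.comp π) lam q := by rw [hφ]; rfl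
    rw [hev, Polynomial.eval₂_eq_sum_range' (ψ.comp π) hq lam, Finset.sum_mul, map_sum]
    refine Finset.sum_congr rfl fun j hj => ?_
    rw [Finset.mem_range] at hj
    exact hterm j (by omega) (π (q.coeff j))
  obtain ⟨n, rfl⟩ : ∃ n, i = n + 1 := ⟨i - 1, by omega⟩
  rw [Nat.add_sub_cancel] at hJf
  refine ⟨?_, ?_, ?_, ?_⟩
  · -- first claim: colon ideal equals image of partial elimination ideal
    apply le_antisymm
    · -- colon ≤ image of pei
      intro x hx
      rw [Ideal.mem_colon_span_singleton, hJf, Ideal.mem_span_singleton_mul] at hx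
      obtain ⟨z, hz, hfz⟩ := hx
      obtain ⟨c, hcz⟩ := mem_pair_pow hz
      obtain ⟨x₀, rfl⟩ := Ideal.Quotient.mk_surjective x
      have he : ∀ j, ∃ ej, π ej = c j := fun j => Ideal.Quotient.mk_surjective _
      choose e he using he
      set q : Polynomial (MvPolynomial σ k) :=
        Polynomial.C x₀ * Polynomial.X ^ (n + 1)
          - ∑ j ∈ Finset.range (n + 1), Polynomial.C (e j) * Polynomial.X ^ j with hqdef
      have hqdeg : q.degree ≤ (n + 1 : ℕ) := by
        refine le_trans (Polynomial.degree_sub_le _ _) (max_le (degree_C_mul_X_pow_le _ _) ?_)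
        refine le_trans (Polynomial.degree_sum_le _ _) (Finset.sup_le fun j hj => ?_)
        rw [Finset.mem_range] at hj
        exact le_trans (degree_C_mul_X_pow_le _ _) (by exact_mod_cast Nat.le_of_lt_succ (by omega))
      have hqnat : q.natDegree < n + 1 + 1 :=
        Nat.lt_succ_of_le (Polynomial.natDegree_le_iff_degree_le.mpr hqdeg)
      have hqcoeff : ∀ j, j < n + 1 → q.coeff j = - e j := by
        intro j hj
        simp only [hqdef, Polynomial.coeff_sub, Polynomial.finset_sum_coeff,
          Polynomial.coeff_C_mul_X_pow, Finset.sum_ite_eq, Finset.mem_range]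
        rw [if_neg (by omega), if_pos hj, zero_sub]
      have hqtop : q.coeff (n + 1) = x₀ := by
        simp only [hqdef, Polynomial.coeff_sub, Polynomial.finset_sum_coeff,
          Polynomial.coeff_C_mul_X_pow, Finset.sum_ite_eq, Finset.mem_range]
        simp
      -- the sum appearing in `key` vanishes
      have hsum : ∑ j ∈ Finset.range (n + 1 + 1),
          π (q.coeff j) * ((π a) ^ j * (π f) ^ (n + 1 - j)) = 0 := by
        rw [Finset.sum_range_succ, hqtop, Nat.sub_self, pow_zero, mul_one]
        have hlow : ∑ j ∈ Finset.range (n + 1),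
            π (q.coeff j) * ((π a) ^ j * (π f) ^ (n + 1 - j)) = - (π f * z) := by
          rw [hcz, Finset.mul_sum, ← Finset.sum_neg_distrib]
          refine Finset.sum_congr rfl fun j hj => ?_
          rw [Finset.mem_range] at hj
          rw [hqcoeff j hj, map_neg, he j]
          have : n + 1 - j = (n - j) + 1 := by omega
          rw [this, pow_succ]
          ring
        rw [hlow, hfz]
        ring
      have hker : q ∈ RingHom.ker φ := by
        rw [RingHom.mem_ker]
        have h0 : φ q * ψ (π f) ^ (n + 1) = 0 := by
          rw [key q hqnat, hsum, map_zero]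
        rcases mul_eq_zero.mp h0 with h | h
        · exact h
        · exact absurd h (pow_ne_zero _ hψfne)
      have hmem : x₀ ∈ pei (RingHom.ker φ) (n + 1) := by
        refine ⟨q, ?_, hqtop⟩
        exact Submodule.mem_inf.mpr ⟨hker, Polynomial.mem_degreeLE.mpr hqdeg⟩
      exact Ideal.mem_map_of_mem π hmem
    · -- image of pei ≤ colon
      rw [Ideal.map_le_iff_le_comap]
      intro c hc
      obtain ⟨q, hq, hlc⟩ := hc
      obtain ⟨hker, hdeg⟩ := Submodule.mem_inf.mp hq
      have hqdeg : q.degree ≤ (n + 1 : ℕ) := Polynomial.mem_degreeLE.mp hdeg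
      have hqnat : q.natDegree < n + 1 + 1 :=
        Nat.lt_succ_of_le (Polynomial.natDegree_le_iff_degree_le.mpr hqdeg)
      have h0 : ∑ j ∈ Finset.range (n + 1 + 1),
          π (q.coeff j) * ((π a) ^ j * (π f) ^ (n + 1 - j)) = 0 := by
        apply ψinj
        rw [map_zero, ← key q hqnat]
        have : φ q = 0 := hker
        rw [this, zero_mul]
      rw [Finset.sum_range_succ, Nat.sub_self, pow_zero, mul_one] at h0
      have htop : π (q.coeff (n + 1)) * (π a) ^ (n + 1)
          = - ∑ j ∈ Finset.range (n + 1), π (q.coeff j) * ((π a) ^ j * (π f) ^ (n + 1 - j)) := by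
        linear_combination h0
      show π c ∈ Submodule.colon Jf (Ideal.span {(π a) ^ (n + 1)})
      rw [Ideal.mem_colon_span_singleton]
      have hc' : π c = π (q.coeff (n + 1)) := by
        rw [← hlc]; rfl
      rw [hc', htop, hJf]
      apply neg_mem
      apply Ideal.sum_mem
      intro j hj
      rw [Finset.mem_range] at hj
      have hsplit : n + 1 - j = (n - j) + 1 := by omega
      have hmem : π f * (π (q.coeff j) * ((π a) ^ j * (π f) ^ (n - j)))
          ∈ Ideal.span {π f} * (Ideal.span {π a, π f}) ^ n :=
        Ideal.mul_mem_mul (Ideal.mem_span_singleton_self _)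
          (Ideal.mul_mem_left _ _ (pair_pow_mem (π a) (π f) (by omega)))
      have heq : π (q.coeff j) * ((π a) ^ j * (π f) ^ (n + 1 - j))
          = π f * (π (q.coeff j) * ((π a) ^ j * (π f) ^ (n - j))) := by
        rw [hsplit, pow_succ]; ring
      rw [heq]
      exact hmem
  · -- second claim: span {āⁱ} ⊔ Jf = (ā, f̄)^i
    rw [hJf, Ideal.span_singleton_pow (π a) (n + 1) |>.symm]
    have hins : (Ideal.span {π a, π f} : Ideal (MvPolynomial σ k ⧸ IY))
        = Ideal.span {π a} ⊔ Ideal.span {π f} := by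
      rw [Ideal.span_insert]
    rw [hins]
    exact (sup_pow_eq _ _ _).symm
  · -- third claim: (Jf : f̄) = (ā, f̄)^(i-1)
    simp only [Nat.add_sub_cancel]
    apply le_antisymm
    · intro x hx
      rw [Ideal.mem_colon_span_singleton, hJf, Ideal.mem_span_singleton_mul] at hx
      obtain ⟨z, hz, hfz⟩ := hx
      have : z = x := mul_left_cancel₀ hfne (by rw [hfz]; ring)
      rwa [← this]
    · intro x hx
      rw [Ideal.mem_colon_span_singleton, hJf, mul_comm x (π f)]
      exact Ideal.mul_mem_mul (Ideal.mem_span_singleton_self _) hx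
  · -- fourth claim: Jf ≤ (f̄)
    rw [hJf]
    exact Ideal.mul_le_left
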